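/- Let 1 ≤ k ≤ n−1, let X ∈ ℂ^{(n−k)×k} and Z ∈ ℂ^{k×k} with XᴴX + ZᴴZ = I_k and Z invertible. Set w = X Z⁻¹ and Θ = ((Z Zᴴ)^{1/2})⁻¹ Z ∈ U(k). Then (I_k + wᴴw)^{1/2} = ((Z Zᴴ)^{1/2})⁻¹, and consequently the frame (X; Z) admits the decomposition X = w (I_k + wᴴw)^{−1/2} Θ and Z = (I_k + wᴴw)^{−1/2} Θ, where (I_k + wᴴw)^{−1/2} denotes the inverse of the positive semidefinite square root of I_k + wᴴw. -/

import Mathlib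

open Matrix
open scoped ComplexOrder

/-- The positive semidefinite square root of a positive semidefinite matrix
(Mathlib's former `Matrix.PosSemidef.sqrt`, removed since; restored with its old definition). -/
noncomputable def Matrix.PosSemidef.sqrt {n 𝕜 : Type*} [Fintype n] [RCLike 𝕜] [DecidableEq n]
    {A : Matrix n n 𝕜} (hA : A.PosSemidef) : Matrix n n 𝕜 :=
  hA.1.eigenvectorUnitary.1 * diagonal ((↑) ∘ (√·) ∘ hA.1.eigenvalues) *
    (star hA.1.eigenvectorUnitary : Matrix n n 𝕜)

open scoped MatrixOrder in
theorem Matrix.PosSemidef.sqrt_eq_cfcSqrt {n 𝕜 : Type*} [Fintype n] [RCLike 𝕜] [DecidableEq n]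
    {A : Matrix n n 𝕜} (hA : A.PosSemidef) : hA.sqrt = CFC.sqrt A := by
  rw [CFC.sqrt_eq_cfc, cfc_nnreal_eq_real _ A, hA.1.cfc_eq]
  simp only [IsHermitian.cfc, Matrix.PosSemidef.sqrt, Real.coe_sqrt, Real.coe_toNNReal',
    Unitary.conjStarAlgAut_apply]
  congr 3
  funext i
  simp [max_eq_left (hA.eigenvalues_nonneg i)]

open scoped MatrixOrder in
theorem Matrix.PosSemidef.sqrt_mul_self {n 𝕜 : Type*} [Fintype n] [RCLike 𝕜] [DecidableEq n]
    {A : Matrix n n 𝕜} (hA : A.PosSemidef) : hA.sqrt * hA.sqrt = A := by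
  rw [hA.sqrt_eq_cfcSqrt]; exact CFC.sqrt_mul_sqrt_self A hA.nonneg

open scoped MatrixOrder in
theorem Matrix.PosSemidef.posSemidef_sqrt {n 𝕜 : Type*} [Fintype n] [RCLike 𝕜] [DecidableEq n]
    {A : Matrix n n 𝕜} (hA : A.PosSemidef) : hA.sqrt.PosSemidef := by
  rw [hA.sqrt_eq_cfcSqrt]; exact (CFC.sqrt_nonneg A).posSemidef

open scoped MatrixOrder in
theorem Matrix.PosSemidef.eq_sqrt_of_sq_eq {n 𝕜 : Type*} [Fintype n] [RCLike 𝕜] [DecidableEq n]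
    {A B : Matrix n n 𝕜} (hA : A.PosSemidef) (hB : B.PosSemidef) (hAB : A ^ 2 = B) :
    A = hB.sqrt := by
  rw [hB.sqrt_eq_cfcSqrt, ← hAB, sq]; exact (CFC.sqrt_mul_self A hA.nonneg).symm

/-- For a Stiefel frame `(X; Z)` with `Z` invertible, `w = X Z⁻¹` and
`Θ = ((Z Zᴴ)^{1/2})⁻¹ Z`, one has `(I_k + wᴴw)^{1/2} = ((Z Zᴴ)^{1/2})⁻¹`, and the frame
decomposes as `X = w (I_k + wᴴw)^{−1/2} Θ`, `Z = (I_k + wᴴw)^{−1/2} Θ`. -/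
theorem stiefel_frame_decomposition
    (n k : ℕ) (hk1 : 1 ≤ k) (hk2 : k ≤ n - 1)
    (X : Matrix (Fin (n - k)) (Fin k) ℂ) (Z : Matrix (Fin k) (Fin k) ℂ)
    (hframe : Xᴴ * X + Zᴴ * Z = 1) (hZ : IsUnit Z.det)
    (w : Matrix (Fin (n - k)) (Fin k) ℂ) (hw : w = X * Z⁻¹) :
    ∀ (h₁ : (1 + wᴴ * w).PosSemidef) (h₂ : (Z * Zᴴ).PosSemidef),
      h₂.sqrt⁻¹ * Z ∈ Matrix.unitaryGroup (Fin k) ℂ ∧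
      h₁.sqrt = h₂.sqrt⁻¹ ∧
      X = w * h₁.sqrt⁻¹ * (h₂.sqrt⁻¹ * Z) ∧
      Z = h₁.sqrt⁻¹ * (h₂.sqrt⁻¹ * Z) := by
  intro h₁ h₂
  set S := h₂.sqrt with hSdef
  have hZH : IsUnit Zᴴ.det := by
    rw [Matrix.det_conjTranspose]; exact hZ.star
  have hSS : S * S = Z * Zᴴ := h₂.sqrt_mul_self
  have hSdet : IsUnit S.det := by
    have : S.det * S.det = (Z * Zᴴ).det := by rw [← Matrix.det_mul, hSS]
    have hu : IsUnit ((Z * Zᴴ).det) := by rw [Matrix.det_mul]; exact hZ.mul hZH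
    exact isUnit_of_mul_isUnit_left (by rw [this]; exact hu)
  have hSherm : S.IsHermitian := h₂.posSemidef_sqrt.isHermitian
  -- key identity : 1 + wᴴw = (Z Zᴴ)⁻¹
  have hXX : Xᴴ * X = 1 - Zᴴ * Z := by
    rw [← hframe]; abel
  have hkey : 1 + wᴴ * w = (Z * Zᴴ)⁻¹ := by
    rw [hw, conjTranspose_mul, Matrix.conjTranspose_nonsing_inv]
    rw [Matrix.mul_inv_rev]
    calc 1 + Zᴴ⁻¹ * Xᴴ * (X * Z⁻¹)
        = 1 + Zᴴ⁻¹ * (Xᴴ * X) * Z⁻¹ := by simp only [Matrix.mul_assoc]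
      _ = 1 + Zᴴ⁻¹ * (1 - Zᴴ * Z) * Z⁻¹ := by rw [hXX]
      _ = 1 + Zᴴ⁻¹ * Z⁻¹ - Zᴴ⁻¹ * Zᴴ * (Z * Z⁻¹) := by noncomm_ring
      _ = Zᴴ⁻¹ * Z⁻¹ := by
          rw [Matrix.nonsing_inv_mul _ hZH, Matrix.mul_nonsing_inv _ hZ, mul_one]; abel
  -- h₁.sqrt = S⁻¹
  have hSinv : h₁.sqrt = S⁻¹ := by
    refine (Matrix.PosSemidef.eq_sqrt_of_sq_eq (h₂.posSemidef_sqrt.inv) h₁ ?_).symm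
    rw [pow_two, ← Matrix.mul_inv_rev, hSS, hkey]
  have hSinvS : S⁻¹ * S = 1 := Matrix.nonsing_inv_mul _ hSdet
  have hSSinv : S * S⁻¹ = 1 := Matrix.mul_nonsing_inv _ hSdet
  have hSinvH : S⁻¹ᴴ = S⁻¹ := by
    rw [Matrix.conjTranspose_nonsing_inv, hSherm.eq]
  refine ⟨?_, hSinv, ?_, ?_⟩
  · rw [Matrix.mem_unitaryGroup_iff]
    show S⁻¹ * Z * star (S⁻¹ * Z) = 1
    rw [Matrix.star_eq_conjTranspose, conjTranspose_mul, hSinvH]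
    calc S⁻¹ * Z * (Zᴴ * S⁻¹) = S⁻¹ * (Z * Zᴴ) * S⁻¹ := by noncomm_ring
      _ = S⁻¹ * (S * S) * S⁻¹ := by rw [hSS]
      _ = (S⁻¹ * S) * (S * S⁻¹) := by noncomm_ring
      _ = 1 := by rw [hSinvS, hSSinv, one_mul]
  · rw [hSinv, Matrix.nonsing_inv_nonsing_inv _ hSdet]
    calc X = X * Z⁻¹ * Z := by rw [Matrix.mul_assoc, Matrix.nonsing_inv_mul _ hZ, Matrix.mul_one]
      _ = w * (S * S⁻¹) * Z := by rw [hSSinv, Matrix.mul_one, hw]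
      _ = w * S * (S⁻¹ * Z) := by simp only [Matrix.mul_assoc]
  · rw [hSinv, Matrix.nonsing_inv_nonsing_inv _ hSdet, ← Matrix.mul_assoc, hSSinv, Matrix.one_mul]
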